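/- arXiv:2601.13929 — 2 statements merged into one kernel-verified Lean document; each statement's English description precedes it below -/
import Mathlib

section
/- Let F be a field, let r, m be natural numbers with 1 ≤ r ≤ m, let c₀, …, c_{r−1} be pairwise distinct elements of F, and fix any 'secret' vector (s₀, …, s_{m−r−1}) ∈ F^{m−r}. Define, for b = (b₀, …, b_{r−1}) ∈ F^r, the polynomial f_b(x) = Σ_{j<r} b_j x^j + Σ_{j<m−r} s_j x^{r+j}. Then the map F^r → F^r sending b to (f_b(c₀), …, f_b(c_{r−1})) is a bijection. Hence any r shares of the ramp scheme can be produced, for every possible secret, by exactly one choice of the random low coefficients. -/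
/-- Ramp-scheme privacy core: over a field `F`, with `1 ≤ r ≤ m`, pairwise
distinct points `c₀, …, c_{r−1}` and a fixed secret `(s₀, …, s_{m−r−1})`, the
map sending the random low coefficients `b ∈ F^r` to the `r` shares
`(f_b(c₀), …, f_b(c_{r−1}))`, where
`f_b(x) = Σ_{j<r} b_j x^j + Σ_{j<m−r} s_j x^{r+j}`, is a bijection. -/
theorem low_coeffs_to_shares_bijective
    {F : Type*} [Field F] (r m : ℕ) (hr : 1 ≤ r) (hrm : r ≤ m)
    (c : Fin r → F) (hc : Function.Injective c)
    (s : Fin (m - r) → F) :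
    Function.Bijective
      (fun b : Fin r → F => fun i : Fin r =>
        (∑ j : Fin r, b j * c i ^ (j : ℕ)) +
          ∑ j : Fin (m - r), s j * c i ^ (r + (j : ℕ))) := by
  set t : Fin r → F := fun i => ∑ j : Fin (m - r), s j * c i ^ (r + (j : ℕ)) with ht
  have hdet : (Matrix.vandermonde c).det ≠ 0 := by
    rw [Matrix.det_vandermonde]
    refine Finset.prod_ne_zero_iff.2 fun i _ => Finset.prod_ne_zero_iff.2 fun j hj => ?_
    rw [Finset.mem_Ioi] at hj
    exact sub_ne_zero.2 fun h => absurd (hc h) (ne_of_gt hj)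
  have hmul : Function.Bijective ((Matrix.vandermonde c).mulVec) := by
    have : Invertible (Matrix.vandermonde c) := (Matrix.vandermonde c).invertibleOfIsUnitDet
      (isUnit_iff_ne_zero.2 hdet)
    exact ⟨fun x y h => by
        have := congrArg ((Matrix.vandermonde c)⁻¹.mulVec) h
        simpa [Matrix.mulVec_mulVec, Matrix.nonsing_inv_mul _ (isUnit_iff_ne_zero.2 hdet)] using this,
       fun y => ⟨(Matrix.vandermonde c)⁻¹.mulVec y, by
        simp [Matrix.mulVec_mulVec, Matrix.mul_nonsing_inv _ (isUnit_iff_ne_zero.2 hdet)]⟩⟩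
  have hadd : Function.Bijective (fun v : Fin r → F => v + t) :=
    (Equiv.addRight t).bijective
  have key : (fun b : Fin r → F => fun i : Fin r =>
        (∑ j : Fin r, b j * c i ^ (j : ℕ)) +
          ∑ j : Fin (m - r), s j * c i ^ (r + (j : ℕ)))
      = (fun v : Fin r → F => v + t) ∘ ((Matrix.vandermonde c).mulVec) := by
    funext b
    funext i
    simp [Matrix.mulVec, dotProduct, Matrix.vandermonde, Finset.mul_sum, mul_comm, ht]
  rw [key]
  exact hadd.comp hmul
end

section
/- Let F be a finite field, let r, m be natural numbers with 1 ≤ r ≤ m, let c₀, …, c_{r−1} be pairwise distinct elements of F, and fix a secret vector s = (s₀, …, s_{m−r−1}) ∈ F^{m−r}. If the low-coefficient vector b ∈ F^r is drawn from the uniform distribution on F^r, then the resulting share vector (f_b(c₀), …, f_b(c_{r−1})), where f_b(x) = Σ_{j<r} b_j x^j + Σ_{j<m−r} s_j x^{r+j}, is uniformly distributed on F^r; in particular, the distribution of any r shares is the same for every secret s, so these shares carry zero information about the encoded file. -/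
lemma uniform_map_bij {α : Type*} [Fintype α] [Nonempty α]
    (f : α → α) (hf : Function.Bijective f) :
    (PMF.uniformOfFintype α).map f = PMF.uniformOfFintype α := by
  classical
  ext a
  rw [PMF.map_apply]
  obtain ⟨b, rfl⟩ := hf.surjective a
  rw [tsum_eq_single b]
  · simp
  · intro b' hb'
    simp only [ite_eq_right_iff]
    intro h
    exact absurd (hf.injective h.symm) hb'

/-- Over a finite field `F`, with `1 ≤ r ≤ m`, pairwise distinct points
`c₀, …, c_{r−1}` and any fixed secret `s ∈ F^{m−r}`: if the low coefficients `b`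
are uniform on `F^r`, then the share vector `(f_b(c₀), …, f_b(c_{r−1}))`, where
`f_b(x) = Σ_{j<r} b_j x^j + Σ_{j<m−r} s_j x^{r+j}`, is uniform on `F^r`.
In particular the distribution of any `r` shares is the same for every secret,
so these shares carry zero information about the encoded file. -/
theorem shares_uniform_of_uniform_low_coeffs
    {F : Type*} [Field F] [Fintype F] (r m : ℕ) (hr : 1 ≤ r) (hrm : r ≤ m)
    (c : Fin r → F) (hc : Function.Injective c)
    (s : Fin (m - r) → F) :
    (PMF.uniformOfFintype (Fin r → F)).map
        (fun b : Fin r → F => fun i : Fin r =>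
          (∑ j : Fin r, b j * c i ^ (j : ℕ)) +
            ∑ j : Fin (m - r), s j * c i ^ (r + (j : ℕ))) =
      PMF.uniformOfFintype (Fin r → F) := by
  apply uniform_map_bij
  rw [← Finite.injective_iff_bijective]
  have hmv : Function.Injective ((Matrix.vandermonde c).mulVec) := by
    rw [Matrix.mulVec_injective_iff_isUnit, Matrix.isUnit_iff_isUnit_det,
      Matrix.det_vandermonde, isUnit_iff_ne_zero]
    exact Finset.prod_ne_zero_iff.2 fun i _ => Finset.prod_ne_zero_iff.2
      fun j hj => sub_ne_zero.2 fun h =>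
        absurd (hc h.symm) (Finset.mem_Ioi.1 hj).ne
  intro b b' hbb'
  apply hmv
  funext i
  have := add_right_cancel (congrFun hbb' i)
  simp only [Matrix.mulVec, Matrix.vandermonde, dotProduct, Matrix.of_apply]
  simp only [mul_comm]
  exact this
end
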